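/- In any swap equilibrium of a 2-type Swap Schelling Game played on a 4-neighbor grid in which both colors have at least two agents, every agent has strictly positive utility. -/

import Mathlib

open SimpleGraph Finset
open scoped Classical

noncomputable def ssgUtil {V A : Type*} [Fintype V] [DecidableEq V]
    (G : SimpleGraph V) [DecidableRel G.Adj]
    {k : ℕ} (c : A → Fin k) (σ : A ≃ V) (i : A) : ℚ :=
  (((G.neighborFinset (σ i)).filter (fun v => c (σ.symm v) = c i)).card : ℚ) /
    (G.degree (σ i) : ℚ)

def ssgSwap {V A : Type*} [DecidableEq V] (σ : A ≃ V) (i j : A) : A ≃ V :=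
  σ.trans (Equiv.swap (σ i) (σ j))

def ssgProfitable {V A : Type*} [Fintype V] [DecidableEq V]
    (G : SimpleGraph V) [DecidableRel G.Adj]
    {k : ℕ} (c : A → Fin k) (σ : A ≃ V) (i j : A) : Prop :=
  c i ≠ c j ∧
    ssgUtil G c σ i < ssgUtil G c (ssgSwap σ i j) i ∧
    ssgUtil G c σ j < ssgUtil G c (ssgSwap σ i j) j

def ssgEquilibrium {V A : Type*} [Fintype V] [DecidableEq V]
    (G : SimpleGraph V) [DecidableRel G.Adj]
    {k : ℕ} (c : A → Fin k) (σ : A ≃ V) : Prop :=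
  ∀ i j : A, ¬ ssgProfitable G c σ i j

def ssgLocalEquilibrium {V A : Type*} [Fintype V] [DecidableEq V]
    (G : SimpleGraph V) [DecidableRel G.Adj]
    {k : ℕ} (c : A → Fin k) (σ : A ≃ V) : Prop :=
  ∀ i j : A, G.Adj (σ i) (σ j) → ¬ ssgProfitable G c σ i j

noncomputable def ssgWelfare {V A : Type*} [Fintype V] [DecidableEq V] [Fintype A]
    (G : SimpleGraph V) [DecidableRel G.Adj]
    {k : ℕ} (c : A → Fin k) (σ : A ≃ V) : ℚ :=
  ∑ i : A, ssgUtil G c σ i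

noncomputable def ssgPhi {V A : Type*} [Fintype V] [DecidableEq V]
    (G : SimpleGraph V) [DecidableRel G.Adj]
    {k : ℕ} (c : A → Fin k) (σ : A ≃ V) : ℕ :=
  (G.edgeFinset.filter (fun e => ∀ u ∈ e, ∀ v ∈ e, c (σ.symm u) = c (σ.symm v))).card


def grid4 (l h : ℕ) : SimpleGraph (Fin l × Fin h) where
  Adj p q := Nat.dist p.1.val q.1.val + Nat.dist p.2.val q.2.val = 1
  symm := by
    constructor
    intro p q hpq
    beta_reduce at hpq ⊢
    rwa [Nat.dist_comm p.1.val, Nat.dist_comm p.2.val] at hpq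
  loopless := by constructor; intro p hp; simp [Nat.dist_self] at hp

instance (l h : ℕ) : DecidableRel (grid4 l h).Adj :=
  fun p q => inferInstanceAs (Decidable
    (Nat.dist p.1.val q.1.val + Nat.dist p.2.val q.2.val = 1))


lemma grid4_adj (l h : ℕ) (p q : Fin l × Fin h) :
    (grid4 l h).Adj p q ↔ Nat.dist p.1.val q.1.val + Nat.dist p.2.val q.2.val = 1 := Iff.rfl

noncomputable def lineCnt (n : ℕ) (a : Fin n) : ℕ :=
  (Finset.univ.filter fun b : Fin n => Nat.dist a.val b.val = 1).card

lemma lineCnt_eq {n : ℕ} (hn : 2 ≤ n) (a : Fin n) :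
    lineCnt n a = (if 0 < a.val then 1 else 0) + (if a.val + 1 < n then 1 else 0) := by
  have ha := a.isLt
  unfold lineCnt
  split_ifs with h1 h2 h2
  · have he : (Finset.univ.filter fun b : Fin n => Nat.dist a.val b.val = 1)
        = {⟨a.val - 1, by omega⟩, ⟨a.val + 1, h2⟩} := by
      ext b
      rw [Finset.mem_filter]
      simp only [Finset.mem_filter, Finset.mem_univ, true_and, Finset.mem_insert,
        Finset.mem_singleton, Fin.ext_iff, Nat.dist]
      omega
    rw [he, Finset.card_insert_of_notMem (by simp only [Finset.mem_singleton, Fin.ext_iff]; omega),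
      Finset.card_singleton]
  · have he : (Finset.univ.filter fun b : Fin n => Nat.dist a.val b.val = 1)
        = {⟨a.val - 1, by omega⟩} := by
      ext b
      have hb := b.isLt
      rw [Finset.mem_filter]
      simp only [Finset.mem_filter, Finset.mem_univ, true_and, Finset.mem_singleton,
        Fin.ext_iff, Nat.dist]
      omega
    rw [he, Finset.card_singleton]
  · have he : (Finset.univ.filter fun b : Fin n => Nat.dist a.val b.val = 1)
        = {⟨a.val + 1, h2⟩} := by
      ext b
      have hb := b.isLt
      rw [Finset.mem_filter]
      simp only [Finset.mem_filter, Finset.mem_univ, true_and, Finset.mem_singleton,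
        Fin.ext_iff, Nat.dist]
      omega
    rw [he, Finset.card_singleton]
  · omega

lemma lineCnt_bounds {n : ℕ} (hn : 2 ≤ n) (a : Fin n) :
    1 ≤ lineCnt n a ∧ lineCnt n a ≤ 2 := by
  have ha := a.isLt
  rw [lineCnt_eq hn]
  split_ifs <;> omega

lemma grid4_degree_eq {l h : ℕ} (p : Fin l × Fin h) :
    (grid4 l h).degree p = lineCnt l p.1 + lineCnt h p.2 := by
  rw [← SimpleGraph.card_neighborFinset_eq_degree]
  have hset : (grid4 l h).neighborFinset p =
      ((Finset.univ.filter fun b : Fin l => Nat.dist p.1.val b.val = 1).image fun b => (b, p.2)) ∪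
      ((Finset.univ.filter fun b : Fin h => Nat.dist p.2.val b.val = 1).image fun b => (p.1, b)) := by
    ext q
    simp only [SimpleGraph.mem_neighborFinset, Finset.mem_union, Finset.mem_image,
      Finset.mem_filter, Finset.mem_univ, true_and, grid4_adj]
    constructor
    · intro hq
      rcases Nat.eq_zero_or_pos (Nat.dist p.2.val q.2.val) with h0 | h0
      · left
        refine ⟨q.1, by omega, ?_⟩
        have : p.2 = q.2 := Fin.ext (Nat.eq_of_dist_eq_zero h0)
        rw [this]
      · right
        refine ⟨q.2, by omega, ?_⟩
        have h1 : Nat.dist p.1.val q.1.val = 0 := by omega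
        have : p.1 = q.1 := Fin.ext (Nat.eq_of_dist_eq_zero h1)
        rw [this]
    · rintro (⟨b, hb, rfl⟩ | ⟨b, hb, rfl⟩) <;>
        simp only [Nat.dist_self] <;> omega
  rw [hset, Finset.card_union_of_disjoint, Finset.card_image_of_injective,
    Finset.card_image_of_injective]
  · rfl
  · intro b1 b2 hb; exact congrArg Prod.snd hb
  · intro b1 b2 hb; exact congrArg Prod.fst hb
  · rw [Finset.disjoint_left]
    rintro q hq1 hq2
    simp only [Finset.mem_image, Finset.mem_filter, Finset.mem_univ, true_and] at hq1 hq2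
    obtain ⟨b1, hb1, rfl⟩ := hq1
    obtain ⟨b2, hb2, he⟩ := hq2
    have h1 : p.1 = b1 := (congrArg Prod.fst he)
    rw [← h1] at hb1
    simp [Nat.dist_self] at hb1

lemma grid4_two_le_degree {l h : ℕ} (hl : 2 ≤ l) (hh : 2 ≤ h) (p : Fin l × Fin h) :
    2 ≤ (grid4 l h).degree p := by
  rw [grid4_degree_eq]
  have h1 := lineCnt_bounds hl p.1
  have h2 := lineCnt_bounds hh p.2
  omega

lemma grid4_deg_lt {l h : ℕ} (hl : 2 ≤ l) (hh : 2 ≤ h) {v w : Fin l × Fin h}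
    (hadj : (grid4 l h).Adj v w) :
    (grid4 l h).degree w < 2 * (grid4 l h).degree v := by
  rw [grid4_degree_eq, grid4_degree_eq]
  have hv1 := lineCnt_bounds hl v.1
  have hv2 := lineCnt_bounds hh v.2
  have hw1 := lineCnt_bounds hl w.1
  have hw2 := lineCnt_bounds hh w.2
  rw [grid4_adj] at hadj
  rcases Nat.eq_zero_or_pos (Nat.dist v.2.val w.2.val) with h0 | h0
  · have : v.2 = w.2 := Fin.ext (Nat.eq_of_dist_eq_zero h0)
    rw [← this]
    omega
  · have h1 : Nat.dist v.1.val w.1.val = 0 := by omega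
    have : v.1 = w.1 := Fin.ext (Nat.eq_of_dist_eq_zero h1)
    rw [← this]
    omega

lemma grid4_closed_eq_univ {l h : ℕ} (hl : 2 ≤ l) (hh : 2 ≤ h)
    (S : Set (Fin l × Fin h))
    (hS : ∀ u ∈ S, ∀ w, (grid4 l h).Adj u w → w ∈ S)
    {u0 : Fin l × Fin h} (hu0 : u0 ∈ S) : ∀ q, q ∈ S := by
  have l0 : 0 < l := by omega
  have h0 : 0 < h := by omega
  have stepx : ∀ (a b : Fin l) (y : Fin h), Nat.dist a.val b.val = 1 →
      (a, y) ∈ S → (b, y) ∈ S := by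
    intro a b y hd hm
    refine hS _ hm _ ?_
    rw [grid4_adj]
    simp [Nat.dist_self, hd]
  have stepy : ∀ (x : Fin l) (a b : Fin h), Nat.dist a.val b.val = 1 →
      (x, a) ∈ S → (x, b) ∈ S := by
    intro x a b hd hm
    refine hS _ hm _ ?_
    rw [grid4_adj]
    simp [Nat.dist_self, hd]
  have downx : ∀ (n : ℕ) (a : Fin l) (y : Fin h), a.val = n → (a, y) ∈ S → ((⟨0, l0⟩ : Fin l), y) ∈ S := by
    intro n
    induction n with
    | zero => intro a y ha hm; rwa [show a = ⟨0, l0⟩ from Fin.ext ha] at hm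
    | succ k ih =>
      intro a y ha hm
      have hk : k < l := by have := a.isLt; omega
      exact ih ⟨k, hk⟩ y rfl (stepx a ⟨k, hk⟩ y (by simp [Nat.dist]; omega) hm)
  have upx : ∀ (n : ℕ) (a : Fin l) (y : Fin h), a.val = n → ((⟨0, l0⟩ : Fin l), y) ∈ S → (a, y) ∈ S := by
    intro n
    induction n with
    | zero => intro a y ha hm; rwa [show a = ⟨0, l0⟩ from Fin.ext ha]
    | succ k ih =>
      intro a y ha hm
      have hk : k < l := by have := a.isLt; omega
      exact stepx ⟨k, hk⟩ a y (by simp [Nat.dist]; omega) (ih ⟨k, hk⟩ y rfl hm)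
  have downy : ∀ (n : ℕ) (x : Fin l) (a : Fin h), a.val = n → (x, a) ∈ S → (x, (⟨0, h0⟩ : Fin h)) ∈ S := by
    intro n
    induction n with
    | zero => intro x a ha hm; rwa [show a = ⟨0, h0⟩ from Fin.ext ha] at hm
    | succ k ih =>
      intro x a ha hm
      have hk : k < h := by have := a.isLt; omega
      exact ih x ⟨k, hk⟩ rfl (stepy x a ⟨k, hk⟩ (by simp [Nat.dist]; omega) hm)
  have upy : ∀ (n : ℕ) (x : Fin l) (a : Fin h), a.val = n → (x, (⟨0, h0⟩ : Fin h)) ∈ S → (x, a) ∈ S := by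
    intro n
    induction n with
    | zero => intro x a ha hm; rwa [show a = ⟨0, h0⟩ from Fin.ext ha]
    | succ k ih =>
      intro x a ha hm
      have hk : k < h := by have := a.isLt; omega
      exact stepy x ⟨k, hk⟩ a (by simp [Nat.dist]; omega) (ih x ⟨k, hk⟩ rfl hm)
  intro q
  have s1 : (u0.1, u0.2) ∈ S := by rwa [Prod.mk.eta]
  have s2 := downy u0.2.val u0.1 u0.2 rfl s1
  have s3 := downx u0.1.val u0.1 _ rfl s2
  have s4 := upx q.1.val q.1 _ rfl s3
  have s5 := upy q.2.val q.1 q.2 rfl s4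
  rwa [Prod.mk.eta] at s5

lemma fin2_total : ∀ z : Fin 2, z = 0 ∨ z = 1 := by decide
lemma fin2_eq_of_ne_of_ne : ∀ (a b z : Fin 2), a ≠ z → b ≠ z → a = b := by decide

section KEY
variable {V : Type*} [Fintype V] [DecidableEq V]
  (G : SimpleGraph V) [DecidableRel G.Adj]
  (c : V → Fin 2) (σ : V ≃ V)

lemma ssgSwap_symm (i j : V) (u : V) :
    (ssgSwap σ i j).symm u = σ.symm (Equiv.swap (σ i) (σ j) u) := rfl

lemma ssgSwap_fst (i j : V) : ssgSwap σ i j i = σ j := by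
  show Equiv.swap (σ i) (σ j) (σ i) = σ j
  rw [Equiv.swap_apply_left]

lemma ssgSwap_snd (i j : V) : ssgSwap σ i j j = σ i := by
  show Equiv.swap (σ i) (σ j) (σ j) = σ i
  rw [Equiv.swap_apply_right]

-- utility of i is zero in equilibrium, consequences for opposite-colored vertex w
lemma keyNonadj (heq : ssgEquilibrium G c σ) (i : V)
    (hdeg : ∀ p, 0 < G.degree p)
    (hNv : ∀ u ∈ G.neighborFinset (σ i), c (σ.symm u) ≠ c i)
    (w : V) (hcw : c (σ.symm w) ≠ c i)
    (hnadj : ¬ G.Adj (σ i) w) :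
    ((G.neighborFinset w).filter (fun u => c (σ.symm u) = c i)).card = 0 := by
  set j := σ.symm w with hj
  have hw : σ j = w := σ.apply_symm_apply w
  have hcij : c i ≠ c j := Ne.symm hcw
  by_contra hne0
  have htw : 1 ≤ ((G.neighborFinset w).filter (fun u => c (σ.symm u) = c i)).card :=
    Nat.one_le_iff_ne_zero.mpr hne0
  have hsymm : ∀ u, (ssgSwap σ i j).symm u = σ.symm (Equiv.swap (σ i) w u) := by
    intro u; rw [← hw]; rfl
  have hqw : (0:ℚ) < (G.degree w : ℚ) := by exact_mod_cast hdeg w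
  have hqv : (0:ℚ) < (G.degree (σ i) : ℚ) := by exact_mod_cast hdeg (σ i)
  apply heq i j
  refine ⟨hcij, ?_, ?_⟩
  · -- i strictly improves
    have hL : ssgUtil G c σ i = 0 := by
      unfold ssgUtil
      rw [div_eq_zero_iff]; left
      norm_cast
      rw [Finset.card_eq_zero, Finset.filter_eq_empty_iff]
      exact fun u hu => hNv u hu
    rw [hL]
    unfold ssgUtil
    rw [ssgSwap_fst, hw]
    have hfeq : ((G.neighborFinset w).filter (fun u => c ((ssgSwap σ i j).symm u) = c i))
        = ((G.neighborFinset w).filter (fun u => c (σ.symm u) = c i)) := by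
      apply Finset.filter_congr
      intro u hu
      have huw : u ≠ w := (G.ne_of_adj ((G.mem_neighborFinset _ _).mp hu)).symm
      have huv : u ≠ σ i := by
        intro e
        exact hnadj (by rw [← e]; exact ((G.mem_neighborFinset _ _).mp hu).symm)
      rw [hsymm u, Equiv.swap_apply_of_ne_of_ne huv huw]
    rw [hfeq]
    apply div_pos _ hqw
    exact_mod_cast htw
  · -- j strictly improves
    have hR : ssgUtil G c (ssgSwap σ i j) j = 1 := by
      unfold ssgUtil
      rw [ssgSwap_snd]
      have hfeq : ((G.neighborFinset (σ i)).filter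
            (fun u => c ((ssgSwap σ i j).symm u) = c j)) = G.neighborFinset (σ i) := by
        rw [Finset.filter_eq_self]
        intro u hu
        have huv : u ≠ σ i := (G.ne_of_adj ((G.mem_neighborFinset _ _).mp hu)).symm
        have huw : u ≠ w := by
          intro e
          exact hnadj (by rw [← e]; exact (G.mem_neighborFinset _ _).mp hu)
        rw [hsymm u, Equiv.swap_apply_of_ne_of_ne huv huw]
        exact fin2_eq_of_ne_of_ne _ _ _ (hNv u hu) hcw
      rw [hfeq, SimpleGraph.card_neighborFinset_eq_degree, div_self (ne_of_gt hqv)]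
    rw [hR]
    unfold ssgUtil
    rw [hw]
    rw [div_lt_one hqw]
    have hpart := Finset.card_filter_add_card_filter_not
      (s := G.neighborFinset w) (p := fun u => c (σ.symm u) = c j)
    have hsub : ((G.neighborFinset w).filter (fun u => c (σ.symm u) = c i)).card
        ≤ ((G.neighborFinset w).filter (fun u => ¬ c (σ.symm u) = c j)).card := by
      apply Finset.card_le_card
      intro u hu
      rw [Finset.mem_filter] at hu ⊢
      exact ⟨hu.1, by rw [hu.2]; exact hcij⟩
    rw [SimpleGraph.card_neighborFinset_eq_degree] at hpart
    have : ((G.neighborFinset w).filter (fun u => c (σ.symm u) = c j)).card < G.degree w := by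
      omega
    exact_mod_cast this

-- adjacent case: at most one neighbor of w has color c i
lemma keyAdj (heq : ssgEquilibrium G c σ) (i : V)
    (hdeg : ∀ p, 0 < G.degree p)
    (hdeg2 : ∀ p q, G.Adj p q → G.degree q < 2 * G.degree p)
    (hNv : ∀ u ∈ G.neighborFinset (σ i), c (σ.symm u) ≠ c i)
    (w : V) (hcw : c (σ.symm w) ≠ c i)
    (hadj : G.Adj (σ i) w) :
    ((G.neighborFinset w).filter (fun u => c (σ.symm u) = c i)).card ≤ 1 := by
  set j := σ.symm w with hj
  have hw : σ j = w := σ.apply_symm_apply w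
  have hcij : c i ≠ c j := Ne.symm hcw
  by_contra hgt
  push_neg at hgt
  set tw := ((G.neighborFinset w).filter (fun u => c (σ.symm u) = c i)).card with htwdef
  have hsymm : ∀ u, (ssgSwap σ i j).symm u = σ.symm (Equiv.swap (σ i) w u) := by
    intro u; rw [← hw]; rfl
  have hqw : (0:ℚ) < (G.degree w : ℚ) := by exact_mod_cast hdeg w
  have hqv : (0:ℚ) < (G.degree (σ i) : ℚ) := by exact_mod_cast hdeg (σ i)
  have hvmem : σ i ∈ (G.neighborFinset w).filter (fun u => c (σ.symm u) = c i) :=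
    Finset.mem_filter.mpr ⟨(G.mem_neighborFinset _ _).mpr hadj.symm, by simp⟩
  have htwle : tw ≤ G.degree w := by
    rw [htwdef, ← SimpleGraph.card_neighborFinset_eq_degree]
    exact Finset.card_filter_le _ _
  -- compute new utilities
  have hUi' : ssgUtil G c (ssgSwap σ i j) i = ((tw - 1 : ℕ) : ℚ) / (G.degree w : ℚ) := by
    unfold ssgUtil
    rw [ssgSwap_fst, hw]
    have hfeq : ((G.neighborFinset w).filter (fun u => c ((ssgSwap σ i j).symm u) = c i))
        = ((G.neighborFinset w).filter (fun u => c (σ.symm u) = c i)).erase (σ i) := by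
      ext u
      simp only [Finset.mem_erase, Finset.mem_filter]
      constructor
      · rintro ⟨hu, hc⟩
        have huw : u ≠ w := (G.ne_of_adj ((G.mem_neighborFinset _ _).mp hu)).symm
        by_cases huv : u = σ i
        · rw [huv, hsymm, Equiv.swap_apply_left] at hc
          rw [← hw, Equiv.symm_apply_apply] at hc
          exact absurd hc.symm hcij
        · rw [hsymm u, Equiv.swap_apply_of_ne_of_ne huv huw] at hc
          exact ⟨huv, hu, hc⟩
      · rintro ⟨huv, hu, hc⟩
        have huw : u ≠ w := (G.ne_of_adj ((G.mem_neighborFinset _ _).mp hu)).symm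
        refine ⟨hu, ?_⟩
        rw [hsymm u, Equiv.swap_apply_of_ne_of_ne huv huw]
        exact hc
    rw [hfeq, Finset.card_erase_of_mem hvmem]
  have hUj' : ssgUtil G c (ssgSwap σ i j) j = ((G.degree (σ i) - 1 : ℕ) : ℚ) / (G.degree (σ i) : ℚ) := by
    unfold ssgUtil
    rw [ssgSwap_snd]
    have hfeq : ((G.neighborFinset (σ i)).filter (fun u => c ((ssgSwap σ i j).symm u) = c j))
        = (G.neighborFinset (σ i)).erase w := by
      ext u
      simp only [Finset.mem_erase, Finset.mem_filter]
      constructor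
      · rintro ⟨hu, hc⟩
        have huv : u ≠ σ i := (G.ne_of_adj ((G.mem_neighborFinset _ _).mp hu)).symm
        by_cases huw : u = w
        · rw [huw, hsymm, Equiv.swap_apply_right, Equiv.symm_apply_apply] at hc
          exact absurd hc hcij
        · exact ⟨huw, hu⟩
      · rintro ⟨huw, hu⟩
        have huv : u ≠ σ i := (G.ne_of_adj ((G.mem_neighborFinset _ _).mp hu)).symm
        refine ⟨hu, ?_⟩
        rw [hsymm u, Equiv.swap_apply_of_ne_of_ne huv huw]
        exact fin2_eq_of_ne_of_ne _ _ _ (hNv u hu) hcw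
    rw [hfeq, Finset.card_erase_of_mem ((G.mem_neighborFinset _ _).mpr hadj),
      SimpleGraph.card_neighborFinset_eq_degree]
  have hUj : ssgUtil G c σ j = ((G.degree w - tw : ℕ) : ℚ) / (G.degree w : ℚ) := by
    unfold ssgUtil
    rw [hw]
    have hpart := Finset.card_filter_add_card_filter_not
      (s := G.neighborFinset w) (p := fun u => c (σ.symm u) = c i)
    have hfeq : ((G.neighborFinset w).filter (fun u => c (σ.symm u) = c j))
        = ((G.neighborFinset w).filter (fun u => ¬ c (σ.symm u) = c i)) := by
      apply Finset.filter_congr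
      intro u _
      constructor
      · intro hc; rw [hc]; exact hcw
      · intro hc; exact fin2_eq_of_ne_of_ne _ _ _ hc hcw
    rw [hfeq]
    rw [SimpleGraph.card_neighborFinset_eq_degree] at hpart
    congr 1
    rw [← htwdef] at hpart
    norm_cast
    omega
  -- i strictly improves
  have himp : ssgUtil G c σ i < ssgUtil G c (ssgSwap σ i j) i := by
    have hL : ssgUtil G c σ i = 0 := by
      unfold ssgUtil
      rw [div_eq_zero_iff]; left
      norm_cast
      rw [Finset.card_eq_zero, Finset.filter_eq_empty_iff]
      exact fun u hu => hNv u hu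
    rw [hL, hUi']
    apply div_pos _ hqw
    have : 1 ≤ tw - 1 := by omega
    exact_mod_cast this
  have hnp := heq i j
  unfold ssgProfitable at hnp
  push_neg at hnp
  have hkey := hnp hcij himp
  rw [hUj', hUj] at hkey
  rw [div_le_div_iff₀ hqv hqw] at hkey
  rw [← Nat.cast_mul, ← Nat.cast_mul, Nat.cast_le] at hkey
  have hlt := hdeg2 _ _ hadj
  have hdv := hdeg (σ i)
  have e1 : (G.degree (σ i) - 1) * G.degree w = G.degree (σ i) * G.degree w - G.degree w := by
    rw [Nat.sub_mul, one_mul]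
  have e2 : (G.degree w - tw) * G.degree (σ i) = G.degree (σ i) * G.degree w - tw * G.degree (σ i) := by
    rw [Nat.sub_mul, mul_comm (G.degree w)]
  rw [e1, e2] at hkey
  have e3 : G.degree w ≤ G.degree (σ i) * G.degree w := Nat.le_mul_of_pos_left _ hdv
  have e4 : tw * G.degree (σ i) ≤ G.degree (σ i) * G.degree w := by
    rw [mul_comm (G.degree (σ i))]
    exact Nat.mul_le_mul htwle (le_refl _)
  have e5 : 2 * G.degree (σ i) ≤ tw * G.degree (σ i) :=
    Nat.mul_le_mul hgt (le_refl _)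
  generalize hA : G.degree (σ i) * G.degree w = A at hkey e3 e4
  generalize hB : tw * G.degree (σ i) = B at hkey e4 e5
  omega

end KEY


theorem stmt18 (l h : ℕ) (hl : 2 ≤ l) (hh : 2 ≤ h)
    (c : Fin l × Fin h → Fin 2)
    (ho : 2 ≤ (Finset.univ.filter (fun i : Fin l × Fin h => c i = 0)).card)
    (hb : 2 ≤ (Finset.univ.filter (fun i : Fin l × Fin h => c i = 1)).card)
    (σ : (Fin l × Fin h) ≃ (Fin l × Fin h))
    (heq : ssgEquilibrium (grid4 l h) c σ) :
    ∀ i : Fin l × Fin h, 0 < ssgUtil (grid4 l h) c σ i := by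
  intro i
  by_contra hnpos
  have hdeg : ∀ p, 0 < (grid4 l h).degree p :=
    fun p => lt_of_lt_of_le (by norm_num) (grid4_two_le_degree hl hh p)
  have hdeg2 : ∀ p q, (grid4 l h).Adj p q → (grid4 l h).degree q < 2 * (grid4 l h).degree p :=
    fun p q hpq => grid4_deg_lt hl hh hpq
  have hzero : ssgUtil (grid4 l h) c σ i = 0 := by
    refine le_antisymm (not_lt.mp hnpos) ?_
    unfold ssgUtil
    positivity
  have hnum : (((grid4 l h).neighborFinset (σ i)).filter (fun u => c (σ.symm u) = c i)).card = 0 := by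
    unfold ssgUtil at hzero
    rcases div_eq_zero_iff.mp hzero with h1 | h1
    · exact_mod_cast h1
    · exfalso
      have : ((grid4 l h).degree (σ i) : ℚ) ≠ 0 := by exact_mod_cast (hdeg (σ i)).ne'
      exact this h1
  have hNv : ∀ u ∈ (grid4 l h).neighborFinset (σ i), c (σ.symm u) ≠ c i := by
    intro u hu hc
    rw [Finset.card_eq_zero] at hnum
    have : u ∈ (((grid4 l h).neighborFinset (σ i)).filter (fun u => c (σ.symm u) = c i)) :=
      Finset.mem_filter.mpr ⟨hu, hc⟩
    rw [hnum] at this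
    exact Finset.notMem_empty u this
  have hxcard : 2 ≤ (Finset.univ.filter (fun p : Fin l × Fin h => c p = c i)).card ∧
      ∃ j0 : Fin l × Fin h, c j0 ≠ c i := by
    rcases fin2_total (c i) with h0 | h0 <;> simp only [h0]
    · refine ⟨ho, ?_⟩
      obtain ⟨j0, hj0⟩ := Finset.card_pos.mp (lt_of_lt_of_le (by norm_num) hb)
      simp only [Finset.mem_filter, Finset.mem_univ, true_and] at hj0
      exact ⟨j0, by rw [hj0]; decide⟩
    · refine ⟨hb, ?_⟩
      obtain ⟨j0, hj0⟩ := Finset.card_pos.mp (lt_of_lt_of_le (by norm_num) ho)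
      simp only [Finset.mem_filter, Finset.mem_univ, true_and] at hj0
      exact ⟨j0, by rw [hj0]; decide⟩
  obtain ⟨hx2, j0, hj0⟩ := hxcard
  set S : Set (Fin l × Fin h) := {u | c (σ.symm u) = c i ∧ u ≠ σ i} with hSdef
  have hclosed : ∀ u ∈ S, ∀ w, (grid4 l h).Adj u w → w ∈ S := by
    rintro u ⟨hcu, hune⟩ w hadj
    have hwv : w ≠ σ i := by
      rintro rfl
      exact hNv u ((SimpleGraph.mem_neighborFinset _ _ _).mpr hadj.symm) hcu
    refine ⟨?_, hwv⟩
    by_contra hcw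
    by_cases hA : (grid4 l h).Adj (σ i) w
    · have hle := keyAdj (grid4 l h) c σ heq i hdeg hdeg2 hNv w hcw hA
      have hsub : ({σ i, u} : Finset (Fin l × Fin h)) ⊆
          (((grid4 l h).neighborFinset w).filter (fun z => c (σ.symm z) = c i)) := by
        intro z hz
        simp only [Finset.mem_insert, Finset.mem_singleton] at hz
        rcases hz with rfl | rfl
        · exact Finset.mem_filter.mpr ⟨(SimpleGraph.mem_neighborFinset _ _ _).mpr hA.symm, by simp⟩
        · exact Finset.mem_filter.mpr ⟨(SimpleGraph.mem_neighborFinset _ _ _).mpr hadj.symm, hcu⟩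
      have h2 := Finset.card_le_card hsub
      rw [Finset.card_pair (Ne.symm hune)] at h2
      omega
    · have h0 := keyNonadj (grid4 l h) c σ heq i hdeg hNv w hcw hA
      rw [Finset.card_eq_zero] at h0
      have : u ∈ (((grid4 l h).neighborFinset w).filter (fun z => c (σ.symm z) = c i)) :=
        Finset.mem_filter.mpr ⟨(SimpleGraph.mem_neighborFinset _ _ _).mpr hadj.symm, hcu⟩
      rw [h0] at this
      exact Finset.notMem_empty u this
  obtain ⟨a, ha, b, hbmem, hab⟩ := Finset.one_lt_card.mp (lt_of_lt_of_le (by norm_num) hx2)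
  simp only [Finset.mem_filter, Finset.mem_univ, true_and] at ha hbmem
  obtain ⟨i', hci', hii⟩ : ∃ i', c i' = c i ∧ i' ≠ i := by
    rcases eq_or_ne a i with rfl | hne
    · exact ⟨b, hbmem, fun e => hab (by rw [e])⟩
    · exact ⟨a, ha, hne⟩
  have hmem : σ i' ∈ S := ⟨by simpa using hci', fun e => hii (σ.injective e)⟩
  have hall := grid4_closed_eq_univ hl hh S hclosed hmem (σ j0)
  exact hj0 (by simpa using hall.1)
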